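/- Let ι and K be finite types, g : ι → K a grouping of the indices, and f : ι → (Fin m → ℝ) → ℝ a family of functions such that f i x > 0 for every i ∈ ι and every x ∈ ℝ^m, and such that for every i the function x ↦ −log(f i x) is convex on ℝ^m. Then the function x ↦ log( Σ_{k ∈ K} ( ∏_{i : g i = k} f i x )⁻¹ ) is convex on ℝ^m, provided K is nonempty (so that the sum is positive and the logarithm is defined). -/

import Mathlib

open Real Finset

/-- A finite sum of convex functions is convex. -/
lemma convexOn_finset_sum' {E : Type*} [AddCommGroup E] [Module ℝ E] {ι : Type*}
    (s : Finset ι) (φ : ι → E → ℝ) (h : ∀ i ∈ s, ConvexOn ℝ Set.univ (φ i)) :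
    ConvexOn ℝ Set.univ (fun x => ∑ i ∈ s, φ i x) := by
  classical
  induction s using Finset.cons_induction with
  | empty => simpa using convexOn_const (0 : ℝ) convex_univ
  | cons a s ha ih =>
      simp only [Finset.sum_cons]
      exact (h a (Finset.mem_cons_self a s)).add
        (ih fun i hi => h i (Finset.mem_cons_of_mem hi))

/-- log-sum-exp of convex functions is convex. -/
lemma convexOn_log_sum_exp {E : Type*} [AddCommGroup E] [Module ℝ E] {K : Type*}
    [Fintype K] [Nonempty K] (h : K → E → ℝ)
    (hc : ∀ k, ConvexOn ℝ Set.univ (h k)) :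
    ConvexOn ℝ Set.univ (fun x => Real.log (∑ k : K, Real.exp (h k x))) := by
  refine ⟨convex_univ, ?_⟩
  intro x _ y _ a b ha hb hab
  have hsum_pos : ∀ z : E, 0 < ∑ k : K, Real.exp (h k z) := fun z =>
    Finset.sum_pos (fun k _ => Real.exp_pos _) Finset.univ_nonempty
  rcases eq_or_lt_of_le ha with rfl | ha'
  · simp at hab; subst hab; simp
  rcases eq_or_lt_of_le hb with rfl | hb'
  · simp at hab; subst hab; simp
  -- main case: 0 < a, 0 < b
  have key : ∑ k : K, Real.exp (h k (a • x + b • y)) ≤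
      (∑ k : K, Real.exp (h k x)) ^ a * (∑ k : K, Real.exp (h k y)) ^ b := by
    have step1 : ∑ k : K, Real.exp (h k (a • x + b • y)) ≤
        ∑ k : K, Real.exp (h k x) ^ a * Real.exp (h k y) ^ b := by
      refine Finset.sum_le_sum fun k _ => ?_
      have := (hc k).2 (Set.mem_univ x) (Set.mem_univ y) ha hb hab
      calc Real.exp (h k (a • x + b • y)) ≤ Real.exp (a * h k x + b * h k y) :=
            Real.exp_le_exp.2 this
        _ = Real.exp (h k x) ^ a * Real.exp (h k y) ^ b := by
            rw [Real.exp_add, ← Real.exp_mul, ← Real.exp_mul, mul_comm a, mul_comm b]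
    refine step1.trans ?_
    have hpq : Real.HolderConjugate (1/a) (1/b) := by
      simpa using Real.HolderConjugate.inv_inv ha' hb' hab
    have := Real.inner_le_Lp_mul_Lq_of_nonneg Finset.univ hpq
      (f := fun k => Real.exp (h k x) ^ a) (g := fun k => Real.exp (h k y) ^ b)
      (fun k _ => Real.rpow_nonneg (Real.exp_pos _).le _)
      (fun k _ => Real.rpow_nonneg (Real.exp_pos _).le _)
    calc ∑ k : K, Real.exp (h k x) ^ a * Real.exp (h k y) ^ b
        ≤ (∑ k : K, (Real.exp (h k x) ^ a) ^ (1/a)) ^ (1 / (1/a)) *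
          (∑ k : K, (Real.exp (h k y) ^ b) ^ (1/b)) ^ (1 / (1/b)) := this
      _ = (∑ k : K, Real.exp (h k x)) ^ a * (∑ k : K, Real.exp (h k y)) ^ b := by
          rw [one_div_one_div, one_div_one_div]
          congr 2
          · exact Finset.sum_congr rfl fun k _ => by
              rw [← Real.rpow_mul (Real.exp_pos _).le, mul_one_div, div_self ha'.ne',
                Real.rpow_one]
          · exact Finset.sum_congr rfl fun k _ => by
              rw [← Real.rpow_mul (Real.exp_pos _).le, mul_one_div, div_self hb'.ne',
                Real.rpow_one]
  calc Real.log (∑ k : K, Real.exp (h k (a • x + b • y)))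
      ≤ Real.log ((∑ k : K, Real.exp (h k x)) ^ a * (∑ k : K, Real.exp (h k y)) ^ b) :=
        Real.log_le_log (hsum_pos _) key
    _ = a * Real.log (∑ k : K, Real.exp (h k x)) + b * Real.log (∑ k : K, Real.exp (h k y)) := by
        rw [Real.log_mul (by positivity) (by positivity),
          Real.log_rpow (hsum_pos x), Real.log_rpow (hsum_pos y)]

/-- If each `fᵢ` is positive and has convex log loss `x ↦ −log(fᵢ x)`, then
the logarithm of the LTS loss,
`x ↦ log( Σ_k (∏_{i : g i = k} fᵢ x)⁻¹ )`, is convex (with `K` nonempty). -/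
theorem log_of_lts_loss_convex {m : ℕ} {ι K : Type*}
    [Fintype ι] [Fintype K] [DecidableEq K] [Nonempty K]
    (g : ι → K) (f : ι → (Fin m → ℝ) → ℝ)
    (hpos : ∀ i (x : Fin m → ℝ), 0 < f i x)
    (hconv : ∀ i, ConvexOn ℝ Set.univ (fun x : Fin m → ℝ => -Real.log (f i x))) :
    ConvexOn ℝ Set.univ (fun x : Fin m → ℝ =>
      Real.log (∑ k : K, (∏ i ∈ Finset.univ.filter (fun i => g i = k), f i x)⁻¹)) := by
  have hrw : ∀ (k : K) (x : Fin m → ℝ),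
      (∏ i ∈ Finset.univ.filter (fun i => g i = k), f i x)⁻¹ =
      Real.exp (∑ i ∈ Finset.univ.filter (fun i => g i = k), -Real.log (f i x)) := by
    intro k x
    rw [Real.exp_sum]
    rw [← Finset.prod_inv_distrib]
    refine Finset.prod_congr rfl fun i _ => ?_
    rw [Real.exp_neg, Real.exp_log (hpos i x)]
  have : (fun x : Fin m → ℝ =>
      Real.log (∑ k : K, (∏ i ∈ Finset.univ.filter (fun i => g i = k), f i x)⁻¹)) =
      fun x => Real.log (∑ k : K,
        Real.exp (∑ i ∈ Finset.univ.filter (fun i => g i = k), -Real.log (f i x))) := by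
    funext x; congr 1; exact Finset.sum_congr rfl fun k _ => hrw k x
  rw [this]
  exact convexOn_log_sum_exp _ fun k =>
    convexOn_finset_sum' _ _ fun i _ => hconv i
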